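/- Correspondence between Weisfeiler-Lehman labels and unfolding trees: for all finite labeled graphs G, G', all vertices v ∈ V(G), v' ∈ V(G'), and every iteration i ∈ ℕ, the Weisfeiler-Lehman labels computed with an injective hash function satisfy ℓ_i(v) = ℓ_i(v') if and only if the depth-i unfolding trees T^i(G, v) and T^i(G', v') are isomorphic as rooted labeled trees. In particular, there is a bijection between the labels in Σ_i occurring on the graphs and the set of pairwise non-isomorphic depth-i unfolding trees. -/

import Mathlib

open scoped Classical

/-- A finite undirected labeled graph: vertices `Fin n`, a symmetric
irreflexive neighborhood relation given by `nbr`, and a vertex labeling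
with values in `σ`. -/
structure LGraph (σ : Type) where
  n : ℕ
  nbr : Fin n → Finset (Fin n)
  symm : ∀ u v, u ∈ nbr v → v ∈ nbr u
  irrefl : ∀ v, v ∉ nbr v
  label : Fin n → σ

/-- The type of isomorphism classes of depth-`i` unfolding trees over label
alphabet `σ`: a depth-0 unfolding tree is just a root label, and a
depth-`(i+1)` unfolding tree is a root label together with the multiset of
its depth-`i` child subtrees. (Using multisets of children makes equality in
`UT σ i` coincide with isomorphism of rooted labeled trees.) -/
def UT (σ : Type) : ℕ → Type
  | 0 => σ
  | (i + 1) => σ × Multiset (UT σ i)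

/-- The depth-`i` unfolding tree `T^i(G, v)` of the graph `G` at vertex `v`
(as an isomorphism class): the root is labeled `ℓ₀(v)` and its child subtrees
are the depth-`(i-1)` unfolding trees at the neighbors of `v`. -/
def utree {σ : Type} (G : LGraph σ) : (i : ℕ) → Fin G.n → UT σ i
  | 0, v => G.label v
  | (i + 1), v => (G.label v, (G.nbr v).val.map (utree G i))

/-- The Weisfeiler-Lehman labels of a graph `G` whose vertices are initially
labeled over `Λ 0`, computed with hash functions `hash i` mapping the pair of
a vertex's current label and the multiset of its neighbors' current labels to
a new label in `Λ (i+1)`. -/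
def wl {Λ : ℕ → Type} (hash : ∀ i, Λ i → Multiset (Λ i) → Λ (i + 1))
    (G : LGraph (Λ 0)) : (i : ℕ) → Fin G.n → Λ i
  | 0 => G.label
  | (i + 1) => fun v => hash i (wl hash G i v) ((G.nbr v).val.map (wl hash G i))

/-- Root label of an unfolding tree. -/
def rootLabel {σ : Type} : ∀ i, UT σ i → σ
  | 0, t => t
  | (_ + 1), t => t.1

lemma rootLabel_utree {σ : Type} (G : LGraph σ) (i : ℕ) (v : Fin G.n) :
    rootLabel i (utree G i v) = G.label v := by
  cases i <;> rfl

/-- Truncating an unfolding tree by one level. -/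
def truncUT {σ : Type} : ∀ i, UT σ (i + 1) → UT σ i
  | 0, t => t.1
  | (i + 1), t => (t.1, t.2.map (truncUT i))

lemma truncUT_utree {σ : Type} (G : LGraph σ) :
    ∀ (i : ℕ) (v : Fin G.n), truncUT i (utree G (i + 1) v) = utree G i v := by
  intro i
  induction i with
  | zero => intro v; rfl
  | succ j ihj =>
    intro v
    show (G.label v, ((G.nbr v).val.map (utree G (j + 1))).map (truncUT j))
        = (G.label v, (G.nbr v).val.map (utree G j))
    rw [Multiset.map_map]
    exact Prod.ext rfl (Multiset.map_congr rfl (fun u _ => ihj u))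

/-- Correspondence between Weisfeiler-Lehman labels and
unfolding trees: if the Weisfeiler-Lehman labels are computed with injective
(perfect) hash functions, then for all graphs `G, G'`, vertices `v, v'`, and
every iteration `i`, the labels `ℓᵢ(v)` and `ℓᵢ(v')` are equal if and only if
the depth-`i` unfolding trees `T^i(G, v)` and `T^i(G', v')` are isomorphic as
rooted labeled trees (i.e., equal as elements of `UT (Λ 0) i`). In particular,
the map sending a WL label to the corresponding unfolding tree is a
well-defined bijection between the occurring labels in `Σᵢ` and the pairwise
non-isomorphic depth-`i` unfolding trees. -/
theorem wl_label_eq_iff_utree_eq {Λ : ℕ → Type}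
    (hash : ∀ i, Λ i → Multiset (Λ i) → Λ (i + 1))
    (hinj : ∀ i a₁ m₁ a₂ m₂, hash i a₁ m₁ = hash i a₂ m₂ → a₁ = a₂ ∧ m₁ = m₂)
    (G G' : LGraph (Λ 0)) :
    ∀ (i : ℕ) (v : Fin G.n) (v' : Fin G'.n),
      wl hash G i v = wl hash G' i v' ↔ utree G i v = utree G' i v' := by
  intro i
  induction i with
  | zero => intro v v'; simp [wl, utree]; exact Iff.rfl
  | succ i ih =>
    intro v v'
    have hmap : ∀ (v : Fin G.n) (v' : Fin G'.n),
        ((G.nbr v).val.map (wl hash G i) = (G'.nbr v').val.map (wl hash G' i)) ↔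
        ((G.nbr v).val.map (utree G i) = (G'.nbr v').val.map (utree G' i)) := by
      intro v v'
      rw [← Multiset.rel_eq, ← Multiset.rel_eq, Multiset.rel_map, Multiset.rel_map]
      constructor
      · exact fun h => h.mono (fun a _ b _ hab => (ih a b).1 hab)
      · exact fun h => h.mono (fun a _ b _ hab => (ih a b).2 hab)
    constructor
    · intro h
      obtain ⟨h1, h2⟩ := hinj i _ _ _ _ h
      have hu := (ih v v').1 h1
      have hl : G.label v = G'.label v' := by
        have := congrArg (rootLabel i) hu
        rwa [rootLabel_utree, rootLabel_utree] at this
      show (G.label v, (G.nbr v).val.map (utree G i))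
          = (G'.label v', (G'.nbr v').val.map (utree G' i))
      exact Prod.ext hl ((hmap v v').1 h2)
    · intro h
      have h1 : G.label v = G'.label v' := congrArg Prod.fst h
      have h2 : (G.nbr v).val.map (utree G i) = (G'.nbr v').val.map (utree G' i) :=
        congrArg Prod.snd h
      show hash i (wl hash G i v) ((G.nbr v).val.map (wl hash G i))
          = hash i (wl hash G' i v') ((G'.nbr v').val.map (wl hash G' i))
      have hv : utree G i v = utree G' i v' := by
        have := congrArg (truncUT i) h
        rwa [truncUT_utree, truncUT_utree] at this
      rw [(ih v v').2 hv, (hmap v v').2 h2]
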